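/- With notation as before (Y^n a cone over Y^{n-k-1} with vertex P^k, 0 ≤ k ≤ n-3, degree d preserved), N_q(Y^n) = Θ_n^{d,q} if and only if N_q(Y^{n-k-1}) = Θ_{n-k-1}^{d,q}. -/

import Mathlib

open MvPolynomial in
lemma aux_eval_smul {σ R : Type*} [CommSemiring R] {φ : MvPolynomial σ R} {n : ℕ}
    (hφ : φ.IsHomogeneous n) (c : R) (v : σ → R) :
    MvPolynomial.eval (c • v) φ = c ^ n * MvPolynomial.eval v φ := by
  rw [MvPolynomial.eval_eq, MvPolynomial.eval_eq, Finset.mul_sum]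
  apply Finset.sum_congr rfl
  intro d hd
  have hdeg : ∑ i ∈ d.support, d i = n := by
    have h := hφ (MvPolynomial.mem_support_iff.mp hd)
    simpa [Finsupp.weight_apply, Finsupp.sum] using h
  simp only [Pi.smul_apply, smul_eq_mul, mul_pow, Finset.prod_mul_distrib,
    Finset.prod_pow_eq_pow_sum, hdeg]
  ring

lemma aux_theta (q d n k : ℕ) (hq : 2 ≤ q) (hd : 2 ≤ d) (hk : k + 3 ≤ n) :
    (q-1) * ((d-1)*q^n + d*q^(n-1) + ∑ i ∈ Finset.range (n-1), q^i)
    = ((q-1) * ((d-1)*q^(n-k-1) + d*q^(n-k-2) + ∑ i ∈ Finset.range (n-k-2), q^i)) * q^(k+1)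
      + (q^(k+1)-1) := by
  obtain ⟨r, rfl⟩ : ∃ r, n = r + k + 3 := ⟨n - k - 3, by omega⟩
  rw [show r+k+3-1 = r+k+2 by omega, show r+k+3-k-1 = r+2 by omega,
    show r+k+3-k-2 = r+1 by omega]
  have h1 : 1 ≤ q ^ (k+1) := Nat.one_le_pow _ _ (by omega)
  zify [show 1 ≤ q by omega, show 1 ≤ d by omega, h1]
  have g : ∀ m : ℕ, ((q:ℤ)-1) * ∑ i ∈ Finset.range m, (q:ℤ)^i = q^m - 1 := fun m => by
    rw [mul_comm, geom_sum_mul]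
  push_cast
  linear_combination g (r+k+2) - (q:ℤ)^(k+1) * g (r+1)


open Projectivization in
noncomputable def projEquiv {K V : Type*} [Field K] [AddCommGroup V] [Module K V]
    (P : V → Prop) (hinv : ∀ (a : Kˣ) (v : V), P ((a : K) • v) ↔ P v) :
    {v : V // v ≠ 0 ∧ P v} ≃ Kˣ × {x : Projectivization K V // P x.rep} where
  toFun v :=
    ⟨(Classical.choose (exists_smul_eq_mk_rep K v.1 v.2.1))⁻¹,
      ⟨Projectivization.mk K v.1 v.2.1, by
        have ha := Classical.choose_spec (exists_smul_eq_mk_rep K v.1 v.2.1)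
        rw [← ha, Units.smul_def]
        exact (hinv _ _).mpr v.2.2⟩⟩
  invFun p := ⟨(p.1 : K) • p.2.1.rep,
    smul_ne_zero (Units.ne_zero p.1) p.2.1.rep_nonzero, (hinv p.1 _).mpr p.2.2⟩
  left_inv v := by
    have ha := Classical.choose_spec (exists_smul_eq_mk_rep K v.1 v.2.1)
    apply Subtype.ext
    have h2 := congrArg (fun w => (((Classical.choose (exists_smul_eq_mk_rep K v.1 v.2.1))⁻¹ : Kˣ) : K) • w) ha
    simp only [Units.smul_def, ← mul_smul] at h2
    simpa using h2.symm
  right_inv p := by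
    obtain ⟨a, x, hx⟩ := p
    have hv : (a : K) • x.rep ≠ 0 := smul_ne_zero (Units.ne_zero a) x.rep_nonzero
    have hmk : Projectivization.mk K ((a : K) • x.rep) hv = x := by
      conv_rhs => rw [← x.mk_rep]
      rw [Projectivization.mk_eq_mk_iff]
      exact ⟨a, by rw [Units.smul_def]⟩
    have ha := Classical.choose_spec (exists_smul_eq_mk_rep K ((a : K) • x.rep) hv)
    set b := Classical.choose (exists_smul_eq_mk_rep K ((a : K) • x.rep) hv) with hb
    -- ha : b • (a • x.rep) = (mk K _ _).rep
    rw [hmk] at ha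
    have hba : ((b : K) * (a : K)) • x.rep = (1 : K) • x.rep := by
      rw [mul_smul, one_smul, ← Units.smul_def, ha]
    have : (b : K) * (a : K) = 1 := smul_left_injective K x.rep_nonzero hba
    have hb1 : b⁻¹ = a := by
      have : b * a = 1 := Units.ext (by push_cast; exact this)
      rw [eq_comm, eq_inv_iff_mul_eq_one, mul_comm]; exact this
    refine Prod.ext hb1 (Subtype.ext ?_)
    exact hmk


def splitEquiv {α β : Type*} [Zero α] [Zero β] (P : α → Prop) (hP0 : P 0)
    [DecidablePred (· = (0 : α))] :
    {p : α × β // p ≠ 0 ∧ P p.1} ≃ ({w : α // w ≠ 0 ∧ P w} × β) ⊕ {u : β // u ≠ 0} where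
  toFun p :=
    if h : p.1.1 = 0 then
      Sum.inr ⟨p.1.2, fun h2 => p.2.1 (Prod.ext h h2)⟩
    else Sum.inl (⟨p.1.1, h, p.2.2⟩, p.1.2)
  invFun x :=
    match x with
    | Sum.inl wu => ⟨(wu.1.1, wu.2), by simp [Prod.ext_iff, wu.1.2.1], wu.1.2.2⟩
    | Sum.inr u => ⟨(0, u.1), by simp [Prod.ext_iff, u.2], hP0⟩
  left_inv p := by
    rcases p with ⟨⟨w, u⟩, hne, hw⟩
    by_cases h : w = 0 <;> simp [h]
  right_inv x := by
    rcases x with ⟨⟨w, hw⟩, u⟩ | ⟨u, hu⟩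
    · simp [hw.1]
    · simp

def myVecEquiv (K : Type*) (m s t : ℕ) (h : m = s + t) :
    (Fin m → K) ≃ (Fin s → K) × (Fin t → K) :=
  (Equiv.arrowCongr (finCongr h) (Equiv.refl K)).trans
    ((Equiv.arrowCongr finSumFinEquiv.symm (Equiv.refl K)).trans
      (Equiv.sumArrowEquivProdArrow _ _ K))

lemma myVecEquiv_fst {K : Type*} (m s t : ℕ) (h : m = s + t) (hle : s ≤ m) (v : Fin m → K) :
    (myVecEquiv K m s t h v).1 = v ∘ Fin.castLE hle := by
  funext i
  simp only [myVecEquiv, Equiv.trans_apply, Equiv.arrowCongr_apply, Equiv.refl_symm,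
    Equiv.coe_refl, Equiv.sumArrowEquivProdArrow, Equiv.coe_fn_mk, Function.comp_apply,
    Equiv.symm_symm, finCongr_symm, id]
  congr 1

lemma myVecEquiv_zero_iff {K : Type*} [Zero K] (m s t : ℕ) (h : m = s + t) (v : Fin m → K) :
    myVecEquiv K m s t h v = 0 ↔ v = 0 := by
  have h0 : myVecEquiv K m s t h 0 = 0 := by
    apply Prod.ext <;> funext i <;> simp [myVecEquiv, Equiv.sumArrowEquivProdArrow]
  rw [← h0, Equiv.apply_eq_iff_eq]


/-- for the cone `Y^n` over `Y^{n-k-1}` with vertex `P^k`,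
`N_q(Y^n) = Θ_n^{d,q}` iff `N_q(Y^{n-k-1}) = Θ_{n-k-1}^{d,q}`. -/
theorem stmt4 (q d n k : ℕ) (hq : IsPrimePow q) (hk : k + 3 ≤ n) (hd : 2 ≤ d)
    (K : Type*) [Field K] [Fintype K] (hK : Fintype.card K = q)
    (G : MvPolynomial (Fin (n - k + 1)) K) (hG : G.IsHomogeneous d) (hG0 : G ≠ 0) :
    (Nat.card {x : Projectivization K (Fin (n + 2) → K) |
        MvPolynomial.eval x.rep
          (MvPolynomial.rename (Fin.castLE (by omega)) G) = 0} =
      (d - 1) * q ^ n + d * q ^ (n - 1) + ∑ i ∈ Finset.range (n - 1), q ^ i) ↔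
    (Nat.card {y : Projectivization K (Fin (n - k + 1) → K) |
        MvPolynomial.eval y.rep G = 0} =
      (d - 1) * q ^ (n - k - 1) + d * q ^ (n - k - 2) +
        ∑ i ∈ Finset.range (n - k - 2), q ^ i) := by
  classical
  have hq2 : 2 ≤ q := hq.two_le
  have hle : n - k + 1 ≤ n + 2 := by omega
  have hm : n + 2 = (n - k + 1) + (k + 1) := by omega
  set P : (Fin (n - k + 1) → K) → Prop := fun w => MvPolynomial.eval w G = 0 with hP
  set F : MvPolynomial (Fin (n + 2)) K := MvPolynomial.rename (Fin.castLE hle) G with hF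
  set Ptop : (Fin (n + 2) → K) → Prop := fun v => MvPolynomial.eval v F = 0 with hPt
  have hGF : F.IsHomogeneous d := hG.rename_isHomogeneous
  have hP0 : P 0 := by
    show MvPolynomial.eval 0 G = 0
    rw [MvPolynomial.eval_zero]
    exact hG.coeff_eq_zero (by simp; omega)
  have hinvB : ∀ (a : Kˣ) (w : Fin (n - k + 1) → K), P ((a : K) • w) ↔ P w := by
    intro a w
    show MvPolynomial.eval _ G = 0 ↔ MvPolynomial.eval _ G = 0
    rw [aux_eval_smul hG]
    simp [mul_eq_zero, pow_eq_zero_iff (show d ≠ 0 by omega), Units.ne_zero]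
  have hinvT : ∀ (a : Kˣ) (v : Fin (n + 2) → K), Ptop ((a : K) • v) ↔ Ptop v := by
    intro a v
    show MvPolynomial.eval _ F = 0 ↔ MvPolynomial.eval _ F = 0
    rw [aux_eval_smul hGF]
    simp [mul_eq_zero, pow_eq_zero_iff (show d ≠ 0 by omega), Units.ne_zero]
  have cardKu : Nat.card Kˣ = q - 1 := by
    rw [Nat.card_eq_fintype_card, Fintype.card_units, hK]
  set N : ℕ := Nat.card {x : Projectivization K (Fin (n + 2) → K) // Ptop x.rep} with hN
  set M : ℕ := Nat.card {y : Projectivization K (Fin (n - k + 1) → K) // P y.rep} with hM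
  have eTop : Nat.card {v : Fin (n + 2) → K // v ≠ 0 ∧ Ptop v} = (q - 1) * N := by
    rw [Nat.card_congr (projEquiv Ptop hinvT), Nat.card_prod, cardKu]
  have eBase : Nat.card {w : Fin (n - k + 1) → K // w ≠ 0 ∧ P w} = (q - 1) * M := by
    rw [Nat.card_congr (projEquiv P hinvB), Nat.card_prod, cardKu]
  haveI : DecidablePred (· = (0 : Fin (n - k + 1) → K)) := Classical.decPred _
  have eSplit : Nat.card {v : Fin (n + 2) → K // v ≠ 0 ∧ Ptop v}
      = (Nat.card {w : Fin (n - k + 1) → K // w ≠ 0 ∧ P w}) * q ^ (k + 1)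
        + (q ^ (k + 1) - 1) := by
    have step1 : ∀ v : Fin (n + 2) → K, Ptop v ↔ P (v ∘ Fin.castLE hle) := fun v => by
      show MvPolynomial.eval _ _ = 0 ↔ _
      rw [hF, MvPolynomial.eval_rename]
    have e2 : {v : Fin (n + 2) → K // v ≠ 0 ∧ Ptop v}
        ≃ ({w : Fin (n - k + 1) → K // w ≠ 0 ∧ P w} × (Fin (k + 1) → K))
          ⊕ {u : Fin (k + 1) → K // u ≠ 0} := by
      refine (Equiv.subtypeEquiv (myVecEquiv K (n + 2) (n - k + 1) (k + 1) hm) fun v => ?_).trans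
        (splitEquiv P hP0)
      rw [myVecEquiv_fst _ _ _ hm hle v]
      exact and_congr (by rw [ne_eq, ne_eq, myVecEquiv_zero_iff]) (step1 v)
    have hfun : Nat.card (Fin (k + 1) → K) = q ^ (k + 1) := by
      simp [Nat.card_eq_fintype_card, hK]
    have h0 : Nat.card {u : Fin (k + 1) → K // u = 0} = 1 := by
      haveI : Unique {u : Fin (k + 1) → K // u = 0} :=
        ⟨⟨⟨0, rfl⟩⟩, fun u => Subtype.ext u.2⟩
      exact Nat.card_unique
    have hcompl := Nat.card_congr (Equiv.sumCompl (fun u : Fin (k + 1) → K => u = 0))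
    rw [Nat.card_sum, hfun, h0] at hcompl
    rw [Nat.card_congr e2, Nat.card_sum, Nat.card_prod, hfun]
    simp only [ne_eq]
    omega
  have E : (q - 1) * N = ((q - 1) * M) * q ^ (k + 1) + (q ^ (k + 1) - 1) := by
    rw [← eTop, eSplit, eBase]
  have T := aux_theta q d n k hq2 hd hk
  have hpow : 0 < q ^ (k + 1) := Nat.pow_pos (by omega)
  show (N = _) ↔ (M = _)
  constructor
  · intro h
    have h1 : ((q - 1) * M) * q ^ (k + 1) + (q ^ (k + 1) - 1)
        = ((q - 1) * ((d - 1) * q ^ (n - k - 1) + d * q ^ (n - k - 2) +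
            ∑ i ∈ Finset.range (n - k - 2), q ^ i)) * q ^ (k + 1) + (q ^ (k + 1) - 1) := by
      rw [← E, ← T, h]
    have h2 := Nat.add_right_cancel h1
    have h3 := Nat.eq_of_mul_eq_mul_right hpow h2
    exact Nat.eq_of_mul_eq_mul_left (by omega : 0 < q - 1) h3
  · intro h
    have h1 : (q - 1) * N = (q - 1) * ((d - 1) * q ^ n + d * q ^ (n - 1) +
        ∑ i ∈ Finset.range (n - 1), q ^ i) := by
      rw [E, T, h]
    exact Nat.eq_of_mul_eq_mul_left (by omega : 0 < q - 1) h1
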